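/- Let h₀ : ℝ → ℝ be r-times continuously differentiable and γ₁, …, γ_r > 0. Define h_j(t) = ḣ_{j-1}(t) + γ_j h_{j-1}(t) for j = 1, …, r. If h_j(0) ≥ 0 for all j = 0, …, r-1 and h_r(t) ≥ 0 for all t ≥ 0, then h_j(t) ≥ 0 for all t ≥ 0 and all j = 0, …, r-1; in particular h₀(t) ≥ 0 for all t ≥ 0. -/

import Mathlib

/-- Comparison lemma step: if `f` is differentiable, `f 0 ≥ 0`, and
`f' + c f ≥ 0` on `[0,∞)`, then `f ≥ 0` on `[0,∞)`. -/
lemma hocbf_step (f : ℝ → ℝ) (c : ℝ) (hf : Differentiable ℝ f)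
    (h0 : 0 ≤ f 0) (hineq : ∀ t, 0 ≤ t → 0 ≤ deriv f t + c * f t) :
    ∀ t, 0 ≤ t → 0 ≤ f t := by
  set g : ℝ → ℝ := fun t => f t * Real.exp (c * t) with hg
  have hgdiff : Differentiable ℝ g := by
    exact hf.mul ((differentiable_const c |>.mul differentiable_id).exp)
  have hgderiv : ∀ t, deriv g t = (deriv f t + c * f t) * Real.exp (c * t) := by
    intro t
    have h1 : HasDerivAt (fun t => c * t) c t := by
      simpa using (hasDerivAt_id t).const_mul c
    have h2 : HasDerivAt (fun t => Real.exp (c * t)) (Real.exp (c * t) * c) t := h1.exp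
    have h3 : HasDerivAt g (deriv f t * Real.exp (c * t) + f t * (Real.exp (c * t) * c)) t :=
      (hf t).hasDerivAt.mul h2
    rw [h3.deriv]; ring
  have hmono : MonotoneOn g (Set.Ici 0) := by
    apply monotoneOn_of_deriv_nonneg (convex_Ici 0) hgdiff.continuous.continuousOn
      (hgdiff.differentiableOn.mono interior_subset)
    intro t ht
    rw [interior_Ici] at ht
    rw [hgderiv t]
    exact mul_nonneg (hineq t ht.le) (Real.exp_pos _).le
  intro t ht
  have := hmono (Set.self_mem_Ici) ht ht
  have hg0 : g 0 = f 0 := by simp [hg]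
  have hgt : 0 ≤ g t := by rw [hg0] at this; linarith
  have : 0 ≤ f t * Real.exp (c * t) := hgt
  nlinarith [Real.exp_pos (c * t)]

/-- Higher-order CBF cascade: with `h_j = ḣ_{j-1} + γ_j h_{j-1}`, if `h_j(0) ≥ 0` for
`j = 0,…,r-1` and `h_r(t) ≥ 0` for all `t ≥ 0`, then `h_j(t) ≥ 0` for all `t ≥ 0`
and `j = 0,…,r-1`; in particular `h₀(t) ≥ 0`. -/
theorem hocbf_cascade (r : ℕ) (h₀ : ℝ → ℝ) (γ : ℕ → ℝ) (H : ℕ → ℝ → ℝ)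
    (hγ : ∀ j, 1 ≤ j → j ≤ r → 0 < γ j)
    (hsmooth : ContDiff ℝ r h₀)
    (hH0 : H 0 = h₀)
    (hHsucc : ∀ j, j < r → H (j + 1) = fun t => deriv (H j) t + γ (j + 1) * H j t)
    (hinit : ∀ j, j < r → H j 0 ≥ 0)
    (hr : ∀ t, 0 ≤ t → H r t ≥ 0) :
    ∀ j, j < r → ∀ t, 0 ≤ t → H j t ≥ 0 := by
  -- smoothness of H j
  have hsm : ∀ j, j ≤ r → ContDiff ℝ ((r - j : ℕ)) (H j) := by
    intro j
    induction j with
    | zero => intro _; simpa [hH0] using hsmooth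
    | succ k ih =>
      intro hk1
      have hk : k < r := Nat.lt_of_succ_le hk1
      have hIH := ih hk.le
      have heq : (r - k : ℕ) = (r - (k+1)) + 1 := by omega
      rw [heq] at hIH
      have hIH' : ContDiff ℝ (((r - (k+1) : ℕ) : ℕ) + 1 : ℕ) (H k) := by
        exact_mod_cast hIH
      rw [hHsucc k hk]
      have hd : ContDiff ℝ ((r - (k+1) : ℕ) : ℕ) (deriv (H k)) :=
        (contDiff_succ_iff_deriv.mp hIH').2.2
      have hk' : ContDiff ℝ ((r - (k+1) : ℕ) : ℕ) (H k) :=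
        hIH'.of_le (by exact_mod_cast Nat.cast_le.mpr (Nat.le_succ _))
      exact hd.add (contDiff_const.mul hk')
  -- descending induction
  have key : ∀ k, k ≤ r → ∀ t, 0 ≤ t → 0 ≤ H (r - k) t := by
    intro k
    induction k with
    | zero => simpa using hr
    | succ m ih =>
      intro hm1 t ht
      have hm : m ≤ r := Nat.le_of_succ_le hm1
      set j := r - (m + 1) with hj
      have hjr : j < r := by omega
      have hjm : j + 1 = r - m := by omega
      have hdiff : Differentiable ℝ (H j) := by
        have := hsm j hjr.le
        have hne : r - j ≠ 0 := by omega
        exact this.differentiable (by exact_mod_cast hne)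
      refine hocbf_step (H j) (γ (j+1)) hdiff (hinit j hjr) ?_ t ht
      intro s hs
      have := ih hm s hs
      rw [← hjm] at this
      rw [hHsucc j hjr] at this
      simpa using this
  intro j hj t ht
  have := key (r - j) (by omega) t ht
  simpa [Nat.sub_sub_self hj.le] using this
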